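/- In the complete graph K_n with unit weights, any spanning star T (shortest path tree rooted at any vertex) satisfies RC_V(T)/RC_V(K_n) = 2(n−1)/n = 2 − 2/n; in particular the approximation ratio (2 − 2/|S|) of Theorem on SP-trees is tight for S = V. -/

import Mathlib

open SimpleGraph Finset
open scoped Classical

/-- The total weight of a walk in a graph with edge-weight function `w`. -/
noncomputable def walkW {V : Type*} (w : V → V → ℝ) {G : SimpleGraph V} {u v : V}
    (p : G.Walk u v) : ℝ :=
  (p.darts.map (fun d => w d.toProd.1 d.toProd.2)).sum

/-- The weighted shortest-path distance between `u` and `v` in `G`. -/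
noncomputable def wdist {V : Type*} (G : SimpleGraph V) (w : V → V → ℝ) (u v : V) : ℝ :=
  sInf {x : ℝ | ∃ p : G.Walk u v, walkW w p = x}

/-- The `S`-routing cost of `G`: sum of distances over ordered pairs from `S`. -/
noncomputable def RC {V : Type*} (G : SimpleGraph V) (w : V → V → ℝ) (S : Finset V) : ℝ :=
  ∑ u ∈ S, ∑ v ∈ S, wdist G w u v

/-- The single-source routing cost from `v` to the nodes of `S`. -/
noncomputable def SSRC {V : Type*} (G : SimpleGraph V) (w : V → V → ℝ) (S : Finset V)
    (v : V) : ℝ :=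
  ∑ u ∈ S, wdist G w v u

/-- The set of terminals of `S` lying in the component of `a` after deleting edge `s(a,b)`. -/
noncomputable def Zcomp {V : Type*} (T : SimpleGraph V) (S : Finset V) (a b : V) : Finset V :=
  S.filter (fun z => (T.deleteEdges {s(a, b)}).Reachable a z)

lemma walkW_one {V : Type*} {G : SimpleGraph V} {u v : V} (p : G.Walk u v) :
    walkW (fun _ _ => (1:ℝ)) p = p.length := by
  simp [walkW, List.map_const']

lemma wdist_eq {V : Type*} {G : SimpleGraph V} {u v : V} (h : G.Reachable u v) :
    wdist G (fun _ _ => (1:ℝ)) u v = G.dist u v := by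
  apply le_antisymm
  · obtain ⟨p, hp⟩ := h.exists_walk_length_eq_dist
    have hbdd : BddBelow {x : ℝ | ∃ q : G.Walk u v, walkW (fun _ _ => (1:ℝ)) q = x} := by
      refine ⟨0, ?_⟩
      rintro x ⟨q, rfl⟩
      rw [walkW_one]; positivity
    exact csInf_le hbdd ⟨p, by rw [walkW_one, hp]⟩
  · refine le_csInf ⟨_, h.some, rfl⟩ ?_
    rintro x ⟨q, rfl⟩
    rw [walkW_one]
    exact_mod_cast SimpleGraph.dist_le q

lemma reach_c {V : Type*} (c : V) (T : SimpleGraph V)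
    (hAdj : ∀ a b, T.Adj a b ↔ (a = c ∧ b ≠ c) ∨ (b = c ∧ a ≠ c)) (u : V) :
    T.Reachable u c := by
  by_cases h : u = c
  · subst h; rfl
  · exact ((hAdj u c).2 (Or.inr ⟨rfl, h⟩)).reachable

lemma star_dist {V : Type*} (c : V) (T : SimpleGraph V)
    (hAdj : ∀ a b, T.Adj a b ↔ (a = c ∧ b ≠ c) ∨ (b = c ∧ a ≠ c)) (u v : V) :
    T.dist u v = if u = v then 0 else if u = c ∨ v = c then 1 else 2 := by
  by_cases huv : u = v
  · simp [huv]
  rw [if_neg huv]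
  by_cases hc : u = c ∨ v = c
  · rw [if_pos hc]
    rw [SimpleGraph.dist_eq_one_iff_adj, hAdj]
    rcases hc with h | h
    · exact Or.inl ⟨h, fun hv => huv (by rw [h, hv])⟩
    · exact Or.inr ⟨h, fun hu => huv (by rw [h, hu])⟩
  · rw [if_neg hc]
    push_neg at hc
    obtain ⟨huc, hvc⟩ := hc
    have hadj1 : T.Adj u c := (hAdj u c).2 (Or.inr ⟨rfl, huc⟩)
    have hadj2 : T.Adj c v := (hAdj c v).2 (Or.inl ⟨rfl, hvc⟩)
    have hle : T.dist u v ≤ 2 := by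
      have := SimpleGraph.dist_le
        (SimpleGraph.Walk.cons hadj1 (SimpleGraph.Walk.cons hadj2 SimpleGraph.Walk.nil))
      simpa using this
    have hne0 : T.dist u v ≠ 0 := by
      rw [SimpleGraph.dist_ne_zero_iff_ne_and_reachable]
      exact ⟨huv, (reach_c c T hAdj u).trans (reach_c c T hAdj v).symm⟩
    have hne1 : T.dist u v ≠ 1 := by
      intro h1
      rcases (hAdj u v).1 (SimpleGraph.dist_eq_one_iff_adj.mp h1) with ⟨h2, _⟩ | ⟨h2, _⟩
      · exact huc h2
      · exact hvc h2
    omega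

/-- In the complete graph with unit weights, a spanning star achieves routing-cost ratio
exactly `2 - 2/n`: the bound `2 - 2/|S|` is tight for `S = V`. -/
theorem stmt14 {V : Type*} [Fintype V] (h : 2 ≤ Fintype.card V) (c : V)
    (T : SimpleGraph V)
    (hAdj : ∀ a b, T.Adj a b ↔ (a = c ∧ b ≠ c) ∨ (b = c ∧ a ≠ c)) :
    (∑ u : V, ∑ v : V, wdist T (fun _ _ => 1) u v) /
        (∑ u : V, ∑ v : V, wdist (⊤ : SimpleGraph V) (fun _ _ => 1) u v) =
      2 - 2 / (Fintype.card V : ℝ) := by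
  set n : ℝ := (Fintype.card V : ℝ) with hn
  have hn2 : (2:ℝ) ≤ n := by rw [hn]; exact_mod_cast h
  -- top graph distances
  have hdtop : ∀ u v : V, wdist (⊤ : SimpleGraph V) (fun _ _ => 1) u v =
      if u = v then (0:ℝ) else 1 := by
    intro u v
    by_cases huv : u = v
    · subst huv
      rw [wdist_eq (SimpleGraph.Reachable.refl u)]
      simp
    · rw [wdist_eq ((SimpleGraph.top_adj u v).2 huv).reachable]
      rw [SimpleGraph.dist_eq_one_iff_adj.mpr ((SimpleGraph.top_adj u v).2 huv)]
      simp [huv]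
  -- star distances
  have hdT : ∀ u v : V, wdist T (fun _ _ => 1) u v =
      if u = v then (0:ℝ) else if u = c ∨ v = c then 1 else 2 := by
    intro u v
    rw [wdist_eq ((reach_c c T hAdj u).trans (reach_c c T hAdj v).symm),
      star_dist c T hAdj]
    split_ifs <;> norm_num
  -- denominator
  have hinnerD : ∀ u : V, ∑ v : V, (if u = v then (0:ℝ) else 1) = n - 1 := by
    intro u
    have : ∀ v : V, (if u = v then (0:ℝ) else 1) = 1 - (if v = u then 1 else 0) := by
      intro v
      by_cases hv : v = u
      · subst hv; simp
      · rw [if_neg (fun hh => hv hh.symm), if_neg hv]; ring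
    rw [Finset.sum_congr rfl fun v _ => this v, Finset.sum_sub_distrib]
    simp [Finset.card_univ, hn]
  have hD : ∑ u : V, ∑ v : V, wdist (⊤ : SimpleGraph V) (fun _ _ => 1) u v = n * (n - 1) := by
    calc ∑ u : V, ∑ v : V, wdist (⊤ : SimpleGraph V) (fun _ _ => 1) u v
        = ∑ u : V, (n - 1) := by
          refine Finset.sum_congr rfl fun u _ => ?_
          rw [Finset.sum_congr rfl fun v _ => hdtop u v, hinnerD u]
      _ = n * (n - 1) := by simp [Finset.card_univ, hn, mul_comm]; ring
  -- numerator inner sums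
  have hinnerN : ∀ u : V, ∑ v : V,
      (if u = v then (0:ℝ) else if u = c ∨ v = c then 1 else 2) =
      if u = c then n - 1 else 2 * n - 3 := by
    intro u
    by_cases huc : u = c
    · rw [if_pos huc]
      have : ∀ v : V, (if u = v then (0:ℝ) else if u = c ∨ v = c then 1 else 2) =
          1 - (if v = u then 1 else 0) := by
        intro v
        by_cases hv : v = u
        · rw [if_pos hv.symm, if_pos hv]; ring
        · rw [if_neg (fun hh => hv hh.symm), if_pos (Or.inl huc), if_neg hv]; ring
      rw [Finset.sum_congr rfl fun v _ => this v, Finset.sum_sub_distrib]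
      simp [Finset.card_univ, hn]
    · rw [if_neg huc]
      have : ∀ v : V, (if u = v then (0:ℝ) else if u = c ∨ v = c then 1 else 2) =
          2 - (if v = u then 2 else 0) - (if v = c then 1 else 0) := by
        intro v
        by_cases hv : v = u
        · have hvc : ¬ v = c := fun hh => huc (hv ▸ hh)
          rw [if_pos hv.symm, if_pos hv, if_neg hvc]; ring
        · by_cases hvc : v = c
          · rw [if_neg (fun hh => hv hh.symm), if_pos (Or.inr hvc), if_neg hv,
              if_pos hvc]
            ring
          · rw [if_neg (fun hh => hv hh.symm), if_neg (by tauto), if_neg hv, if_neg hvc]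
            ring
      rw [Finset.sum_congr rfl fun v _ => this v]
      rw [Finset.sum_sub_distrib, Finset.sum_sub_distrib]
      simp only [Finset.sum_ite_eq', Finset.mem_univ, if_pos, Finset.sum_const,
        Finset.card_univ]
      push_cast [hn]
      ring
  have hN : ∑ u : V, ∑ v : V, wdist T (fun _ _ => 1) u v = 2 * (n - 1) ^ 2 := by
    calc ∑ u : V, ∑ v : V, wdist T (fun _ _ => 1) u v
        = ∑ u : V, (if u = c then n - 1 else 2 * n - 3) := by
          refine Finset.sum_congr rfl fun u _ => ?_
          rw [Finset.sum_congr rfl fun v _ => hdT u v, hinnerN u]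
      _ = 2 * (n - 1) ^ 2 := by
          have : ∀ u : V, (if u = c then n - 1 else 2 * n - 3) =
              (2 * n - 3) - (if u = c then n - 2 else 0) := by
            intro u
            by_cases hu : u = c
            · rw [if_pos hu, if_pos hu]; ring
            · rw [if_neg hu, if_neg hu]; ring
          rw [Finset.sum_congr rfl fun u _ => this u, Finset.sum_sub_distrib]
          simp only [Finset.sum_ite_eq', Finset.mem_univ, if_pos, Finset.sum_const,
            Finset.card_univ]
          push_cast [hn]
          ring
  rw [hN, hD]
  have hn0 : n ≠ 0 := by linarith
  have hn1 : n - 1 ≠ 0 := by linarith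
  field_simp
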